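/- Let 1 ≤ p < q < ∞, ε ∈ (0,1), k = ⌊ε^{−p}⌋, and m ≥ 2k+1. Let x ∈ ℝ^m have exactly 2k+1 entries equal to (2k+1)^{−1/p} and the rest zero (so ‖x‖_p = 1). Then for any vector w ∈ ℝ^m supported on at most k coordinates, ‖w − x‖_q ≥ 3^{−1/p}·ε^{1 − p/q}. -/
import Mathlib


open Finset

/-- **Lower bound for denoised outputs.** Let `1 ≤ p < q < ∞`, `ε ∈ (0,1)`,
`k = ⌊ε^{-p}⌋`, `m ≥ 2k+1`, and let `x ∈ ℝ^m` have exactly `2k+1` entries equal to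
`(2k+1)^{-1/p}` and all other entries `0` (so `‖x‖_p = 1`). Then every `w ∈ ℝ^m`
supported on at most `k` coordinates satisfies `‖w - x‖_q ≥ 3^{-1/p}·ε^{1-p/q}`. -/
theorem stmt16 {m : ℕ} (p q : ℝ) (hp : 1 ≤ p) (hpq : p < q)
    (ε : ℝ) (hε : ε ∈ Set.Ioo (0 : ℝ) 1)
    (k : ℕ) (hk : k = ⌊ε ^ (-p)⌋₊) (hm : 2 * k + 1 ≤ m)
    (x : Fin m → ℝ) (T : Finset (Fin m)) (hT : T.card = 2 * k + 1)
    (hxT : ∀ i, x i = if i ∈ T then ((2 * k + 1 : ℕ) : ℝ) ^ (-(1 / p)) else 0)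
    (w : Fin m → ℝ) (hw : (Finset.univ.filter fun i => w i ≠ 0).card ≤ k) :
    (3 : ℝ) ^ (-(1 / p)) * ε ^ (1 - p / q)
      ≤ (∑ i, |w i - x i| ^ q) ^ (1 / q) := by
  obtain ⟨hε0, hε1⟩ := hε
  have hp0 : 0 < p := lt_of_lt_of_le one_pos hp
  have hq1 : 1 < q := lt_of_le_of_lt hp hpq
  have hq0 : 0 < q := lt_trans one_pos hq1
  set c : ℝ := ((2 * k + 1 : ℕ) : ℝ) ^ (-(1 / p)) with hc_def
  have hbase : (0:ℝ) < ((2 * k + 1 : ℕ) : ℝ) := by positivity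
  have hc : 0 < c := Real.rpow_pos_of_pos hbase _
  set F := Finset.univ.filter fun i => w i ≠ 0 with hF
  set S := T \ F with hS
  have hSk : k + 1 ≤ S.card := by
    have h1 : T.card - F.card ≤ S.card := Finset.le_card_sdiff F T
    omega
  have hsum : (S.card : ℝ) * c ^ q ≤ ∑ i, |w i - x i| ^ q := by
    have h1 : ∑ i ∈ S, |w i - x i| ^ q = (S.card : ℝ) * c ^ q := by
      rw [Finset.sum_congr rfl (fun i hi => ?_), Finset.sum_const, nsmul_eq_mul]
      have hiT : i ∈ T := (Finset.mem_sdiff.mp hi).1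
      have hiw : w i = 0 := by
        have h2 := (Finset.mem_sdiff.mp hi).2
        simp [hF] at h2; exact h2
      rw [hxT i, if_pos hiT, hiw, zero_sub, abs_neg, abs_of_nonneg hc.le]
    calc (S.card : ℝ) * c ^ q = ∑ i ∈ S, |w i - x i| ^ q := h1.symm
      _ ≤ ∑ i, |w i - x i| ^ q :=
          Finset.sum_le_sum_of_subset_of_nonneg (Finset.subset_univ S)
            (fun i _ _ => Real.rpow_nonneg (abs_nonneg _) q)
  have hek : (k : ℝ) ≤ ε ^ (-p) := by
    rw [hk]; exact Nat.floor_le (Real.rpow_nonneg hε0.le _)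
  have hek1 : ε ^ (-p) ≤ (k : ℝ) + 1 := by
    rw [hk]; exact (Nat.lt_floor_add_one _).le
  have hone : (1 : ℝ) ≤ ε ^ (-p) := by
    rw [show (1:ℝ) = ε ^ (0:ℝ) by simp]
    exact Real.rpow_le_rpow_of_exponent_ge hε0 hε1.le (by linarith)
  -- Part A : ε ^ (-(p/q)) ≤ (k+1)^(1/q)
  have hA : ε ^ (-(p / q)) ≤ ((k : ℝ) + 1) ^ (1 / q) := by
    have : ε ^ (-(p / q)) = (ε ^ (-p)) ^ (1 / q) := by
      rw [← Real.rpow_mul hε0.le]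
      congr 1; field_simp
    rw [this]
    exact Real.rpow_le_rpow (Real.rpow_nonneg hε0.le _) hek1 (by positivity)
  -- Part B : 3^(-(1/p)) * ε ≤ c
  have hB : (3:ℝ) ^ (-(1 / p)) * ε ≤ c := by
    have h3 : ((2 * k + 1 : ℕ) : ℝ) ≤ 3 * ε ^ (-p) := by
      push_cast; nlinarith
    have h4 : (3 * ε ^ (-p)) ^ (-(1 / p)) ≤ c :=
      Real.rpow_le_rpow_of_nonpos hbase h3 (neg_nonpos.mpr (by positivity))
    have h5 : (3 * ε ^ (-p)) ^ (-(1 / p))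
        = (3:ℝ) ^ (-(1 / p)) * ε := by
      rw [Real.mul_rpow (by norm_num) (Real.rpow_nonneg hε0.le _),
        ← Real.rpow_mul hε0.le]
      congr 1
      rw [show -p * -(1 / p) = 1 by field_simp]
      exact Real.rpow_one ε
    linarith [h5 ▸ h4]
  have hAB : (3 : ℝ) ^ (-(1 / p)) * ε ^ (1 - p / q) ≤ ((S.card : ℝ)) ^ (1 / q) * c := by
    have hkS : ((k : ℝ) + 1) ^ (1 / q) ≤ ((S.card : ℝ)) ^ (1 / q) := by
      apply Real.rpow_le_rpow (by positivity) _ (by positivity)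
      exact_mod_cast hSk
    have hsplit : ε ^ (1 - p / q) = ε * ε ^ (-(p / q)) := by
      rw [show (1 : ℝ) - p / q = 1 + -(p / q) by ring, Real.rpow_add hε0,
        Real.rpow_one]
    rw [hsplit]
    calc (3 : ℝ) ^ (-(1 / p)) * (ε * ε ^ (-(p / q)))
        = ((3 : ℝ) ^ (-(1 / p)) * ε) * ε ^ (-(p / q)) := by ring
      _ ≤ c * ((k : ℝ) + 1) ^ (1 / q) := by
          apply mul_le_mul hB hA (Real.rpow_nonneg hε0.le _) hc.le
      _ ≤ c * ((S.card : ℝ)) ^ (1 / q) := by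
          exact mul_le_mul_of_nonneg_left hkS hc.le
      _ = ((S.card : ℝ)) ^ (1 / q) * c := by ring
  calc (3 : ℝ) ^ (-(1 / p)) * ε ^ (1 - p / q)
      ≤ ((S.card : ℝ)) ^ (1 / q) * c := hAB
    _ = ((S.card : ℝ) * c ^ q) ^ (1 / q) := by
        rw [Real.mul_rpow (by positivity) (by positivity),
          ← Real.rpow_mul hc.le, mul_one_div_cancel hq0.ne', Real.rpow_one]
    _ ≤ (∑ i, |w i - x i| ^ q) ^ (1 / q) :=
        Real.rpow_le_rpow (by positivity) hsum (by positivity)
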